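/- Let G be a directed graph with terminals T and fix a vertex z and an integer p. The number of sets S such that (i) S is an important v–T separator of size at most p for some vertex v, and (ii) z lies in the exact reverse shadow of S (S is a minimal z–T separator), is at most 4^p. -/

import Mathlib

variable {V : Type*}

/-- A single edge step in `G \ S`: an edge of `E` with both endpoints outside `S`. -/
def DStep (E : V → V → Prop) (S : Set V) (a b : V) : Prop :=
  E a b ∧ a ∉ S ∧ b ∉ S

/-- `b` is reachable from `a` by a directed path in `G \ S`. -/
def DReach (E : V → V → Prop) (S : Set V) (a b : V) : Prop :=
  Relation.ReflTransGen (DStep E S) a b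

/-- The set of vertices reachable from the set `X` in `G \ S`. -/
def RSet (E : V → V → Prop) (S X : Set V) : Set V :=
  {v | ∃ x ∈ X, DReach E S x v}

/-- `S` is an `X`–`Y` separator: disjoint from `X ∪ Y` and destroying all `X → Y` paths. -/
def IsSep (E : V → V → Prop) (X Y S : Set V) : Prop :=
  S ∩ (X ∪ Y) = ∅ ∧ ∀ x ∈ X, ∀ y ∈ Y, ¬ DReach E S x y

/-- `S` is an inclusion-wise minimal `X`–`Y` separator. -/
def IsMinSep (E : V → V → Prop) (X Y S : Set V) : Prop :=
  IsSep E X Y S ∧ ∀ S', S' ⊂ S → ¬ IsSep E X Y S'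

/-- `S` is an important `X`–`Y` separator: a minimal separator such that no separator of at
most the same size has a strictly larger set of vertices reachable from `X`. -/
def IsImpSep (E : V → V → Prop) (X Y S : Set V) : Prop :=
  IsMinSep E X Y S ∧
    ¬ ∃ S', IsSep E X Y S' ∧ S'.ncard ≤ S.ncard ∧ RSet E S X ⊂ RSet E S' X

/-- `S` is a (vertex) multiway cut of `(G, T)`. -/
def IsMWC (E : V → V → Prop) (T S : Set V) : Prop :=
  S ∩ T = ∅ ∧ ∀ t₁ ∈ T, ∀ t₂ ∈ T, t₁ ≠ t₂ → ¬ DReach E S t₁ t₂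

/-- The forward shadow of `S` with respect to `T`: vertices outside `S ∪ T` not reachable
from `T` in `G \ S`. -/
def fShadow (E : V → V → Prop) (T S : Set V) : Set V :=
  {v | v ∉ S ∧ v ∉ T ∧ ∀ t ∈ T, ¬ DReach E S t v}

/-- The reverse shadow of `S` with respect to `T`: vertices outside `S ∪ T` that cannot
reach `T` in `G \ S`. -/
def rShadow (E : V → V → Prop) (T S : Set V) : Set V :=
  {v | v ∉ S ∧ v ∉ T ∧ ∀ t ∈ T, ¬ DReach E S v t}

/-- The adjacency of `torso(G, C)`: an edge `(a, b)` whenever `a, b ∈ C` and `G` has a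
directed `a → b` path whose internal vertices all lie outside `C`. -/
def TorsoAdj (E : V → V → Prop) (C : Set V) (a b : V) : Prop :=
  a ∈ C ∧ b ∈ C ∧ ∃ w, E a w ∧ Relation.ReflTransGen (fun x y => x ∉ C ∧ E x y) w b

/-- out-boundary of a set -/
def bd (E : V → V → Prop) (A : Set V) : Set V := {w | w ∉ A ∧ ∃ a ∈ A, E a w}

section Aux

variable {E : V → V → Prop} {S S' S₁ S₂ X X' Y T A B C : Set V} {a b x v w z : V}

lemma dstep_anti (h : DStep E S a b) (hS : S' ⊆ S) : DStep E S' a b :=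
  ⟨h.1, fun hc => h.2.1 (hS hc), fun hc => h.2.2 (hS hc)⟩

lemma dreach_anti (h : DReach E S a b) (hS : S' ⊆ S) : DReach E S' a b :=
  Relation.ReflTransGen.mono (fun _ _ hs => dstep_anti hs hS) _ _ h

lemma rset_anti (hS : S' ⊆ S) : RSet E S X ⊆ RSet E S' X :=
  fun _ ⟨x, hx, hr⟩ => ⟨x, hx, dreach_anti hr hS⟩

lemma rset_mono_source (h : X ⊆ X') : RSet E S X ⊆ RSet E S X' :=
  fun _ ⟨x, hx, hr⟩ => ⟨x, h hx, hr⟩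

lemma subset_rset : X ⊆ RSet E S X := fun x hx => ⟨x, hx, Relation.ReflTransGen.refl⟩

lemma reach_not_mem (hx : x ∉ S) (h : DReach E S x v) : v ∉ S := by
  induction h with
  | refl => exact hx
  | tail _ h2 _ => exact h2.2.2

lemma rset_not_mem (hX : ∀ x ∈ X, x ∉ S) (hv : v ∈ RSet E S X) : v ∉ S := by
  obtain ⟨x, hx, hr⟩ := hv
  exact reach_not_mem (hX x hx) hr

lemma rset_trans (hv : v ∈ RSet E S X) (h : DReach E S v w) : w ∈ RSet E S X := by
  obtain ⟨x, hx, hr⟩ := hv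
  exact ⟨x, hx, hr.trans h⟩

lemma bd_rset_subset (hX : ∀ x ∈ X, x ∉ S) : bd E (RSet E S X) ⊆ S := by
  rintro w ⟨hw, u, hu, he⟩
  by_contra hwS
  exact hw (rset_trans hu (Relation.ReflTransGen.single ⟨he, rset_not_mem hX hu, hwS⟩))

lemma reach_stay (hC : x ∈ C) (h : DReach E (bd E C) x v) : v ∈ C := by
  induction h with
  | refl => exact hC
  | tail _ h2 ih => by_contra hc; exact h2.2.2 ⟨hc, _, ih, h2.1⟩

lemma rset_bd_subset (hX : X ⊆ C) : RSet E (bd E C) X ⊆ C := by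
  rintro v ⟨x, hx, hr⟩
  exact reach_stay (hX hx) hr

lemma reach_transfer (h : DReach E S₁ x v) (hd : ∀ w, DReach E S₁ x w → w ∉ S₂) :
    DReach E S₂ x v := by
  induction h with
  | refl => exact Relation.ReflTransGen.refl
  | tail hab h1 ih =>
    exact ih.tail ⟨h1.1, hd _ hab, hd _ (hab.tail h1)⟩

lemma rset_transfer (h : ∀ w ∈ RSet E S₁ X, w ∉ S₂) : RSet E S₁ X ⊆ RSet E S₂ X := by
  rintro v ⟨x, hx, hr⟩
  exact ⟨x, hx, reach_transfer hr (fun w hw => h w ⟨x, hx, hw⟩)⟩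

lemma isSep_iff : IsSep E X Y S ↔
    (∀ a ∈ X ∪ Y, a ∉ S) ∧ ∀ x ∈ X, ∀ y ∈ Y, ¬ DReach E S x y := by
  unfold IsSep
  constructor
  · rintro ⟨h1, h2⟩
    refine ⟨fun a ha haS => ?_, h2⟩
    exact (Set.eq_empty_iff_forall_notMem.1 h1 a) ⟨haS, ha⟩
  · rintro ⟨h1, h2⟩
    refine ⟨Set.eq_empty_iff_forall_notMem.2 fun a ⟨h, h'⟩ => h1 a h' h, h2⟩

lemma IsSep.notmem_source (h : IsSep E X Y S) (hx : x ∈ X) : x ∉ S :=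
  (isSep_iff.1 h).1 x (Or.inl hx)

lemma IsSep.notmem_target (h : IsSep E X Y S) (ht : x ∈ Y) : x ∉ S :=
  (isSep_iff.1 h).1 x (Or.inr ht)

lemma IsSep.rset_target (h : IsSep E X Y S) (ht : v ∈ Y) : v ∉ RSet E S X := by
  rintro ⟨x, hx, hr⟩
  exact h.2 x hx v ht hr

lemma sep_mono_source (hX : X ⊆ X') (h : IsSep E X' Y S) : IsSep E X Y S := by
  rw [isSep_iff] at h ⊢
  exact ⟨fun a ha => h.1 a (ha.imp (fun h' => hX h') id), fun x hx => h.2 x (hX hx)⟩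

/-- boundary of the reachable set of a separator is again a separator -/
lemma sep_bd (h : IsSep E X Y S) : IsSep E X Y (bd E (RSet E S X)) := by
  rw [isSep_iff]
  have hb : bd E (RSet E S X) ⊆ S := bd_rset_subset (fun x hx => h.notmem_source hx)
  refine ⟨fun a ha haS => (isSep_iff.1 h).1 a ha (hb haS), fun x hx y hy hr => ?_⟩
  have : y ∈ RSet E S X := reach_stay (subset_rset hx) hr
  exact h.rset_target hy this

lemma sep_rset_grow (h : IsSep E X Y S) :
    RSet E S X ⊆ RSet E (bd E (RSet E S X)) X :=
  rset_transfer (fun w hw hc => hc.1 hw)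

lemma minsep_bd_eq (h : IsMinSep E X Y S) : bd E (RSet E S X) = S := by
  have hsub : bd E (RSet E S X) ⊆ S := bd_rset_subset (fun x hx => h.1.notmem_source hx)
  refine hsub.antisymm fun s hs => ?_
  by_contra hnb
  have hsR : s ∉ RSet E S X := fun hc => (rset_not_mem (fun x hx => h.1.notmem_source hx) hc) hs
  -- then S \ {s} is a separator
  refine h.2 (S \ {s}) ⟨Set.diff_subset, fun hc => (hc hs).2 rfl⟩ ?_
  rw [isSep_iff]
  refine ⟨fun a ha haS => (isSep_iff.1 h.1).1 a ha haS.1, fun x hx y hy hr => ?_⟩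
  have key : ∀ u, DReach E (S \ {s}) x u → u ∈ RSet E S X := by
    intro u hu
    induction hu with
    | refl => exact subset_rset hx
    | @tail b c hab h2 ih =>
      by_cases hcs : c = s
      · subst hcs
        exact absurd ⟨hsR, b, ih, h2.1⟩ hnb
      · exact rset_trans ih (Relation.ReflTransGen.single
          ⟨h2.1, rset_not_mem (fun x hx => h.1.notmem_source hx) ih, fun hc => h2.2.2 ⟨hc, hcs⟩⟩)
  exact h.1.rset_target hy (key y hr)

end Aux
section Aux2
variable [Fintype V] {E : V → V → Prop} {S S' X X' Y T A B C : Set V} {a b x v w z : V}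

lemma exists_minsep_subset (h : IsSep E X Y S) :
    ∃ S', S' ⊆ S ∧ IsMinSep E X Y S' ∧ RSet E S X ⊆ RSet E S' X := by
  have H : ∀ n (S : Set V), S.ncard ≤ n → IsSep E X Y S →
      ∃ S', S' ⊆ S ∧ IsMinSep E X Y S' ∧ RSet E S X ⊆ RSet E S' X := by
    intro n
    induction n with
    | zero =>
      intro S hn hs
      have : S = ∅ := Set.ncard_eq_zero (Set.toFinite S) |>.1 (Nat.le_zero.1 hn)
      subst this
      exact ⟨∅, subset_rfl, ⟨hs, fun S' h1 _ => (h1.trans_le (Set.empty_subset S')).false⟩, subset_rfl⟩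
    | succ n ih =>
      intro S hn hs
      by_cases hex : ∃ S'', S'' ⊂ S ∧ IsSep E X Y S''
      · obtain ⟨S'', hsub, hsep⟩ := hex
        have hle : S''.ncard ≤ n :=
          Nat.lt_succ_iff.1 (lt_of_lt_of_le (Set.ncard_lt_ncard hsub (Set.toFinite S)) hn)
        obtain ⟨S', h1, h2, h3⟩ := ih S'' hle hsep
        exact ⟨S', h1.trans hsub.subset, h2, (rset_anti hsub.subset).trans h3⟩
      · exact ⟨S, subset_rfl, ⟨hs, fun S' h1 h2 => hex ⟨S', h1, h2⟩⟩, subset_rfl⟩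
  exact H S.ncard S le_rfl h

lemma bd_union_subset : bd E (A ∪ B) ⊆ bd E A ∪ bd E B := by
  rintro w ⟨hw, u, hu, he⟩
  rcases hu with hu | hu
  · exact Or.inl ⟨fun hc => hw (Or.inl hc), u, hu, he⟩
  · exact Or.inr ⟨fun hc => hw (Or.inr hc), u, hu, he⟩

lemma bd_inter_subset : bd E (A ∩ B) ⊆ bd E A ∪ bd E B := by
  rintro w ⟨hw, u, hu, he⟩
  by_cases hwa : w ∈ A
  · exact Or.inr ⟨fun hc => hw ⟨hwa, hc⟩, u, hu.2, he⟩
  · exact Or.inl ⟨hwa, u, hu.1, he⟩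

lemma bd_submod :
    (bd E (A ∪ B)).ncard + (bd E (A ∩ B)).ncard ≤ (bd E A).ncard + (bd E B).ncard := by
  have h1 : bd E (A ∪ B) ∪ bd E (A ∩ B) ⊆ bd E A ∪ bd E B := by
    rintro w (hw | hw)
    · exact bd_union_subset hw
    · exact bd_inter_subset hw
  have h2 : bd E (A ∪ B) ∩ bd E (A ∩ B) ⊆ bd E A ∩ bd E B := by
    rintro w ⟨h3, h4⟩
    obtain ⟨hw, u, hu, he⟩ := h4
    exact ⟨⟨fun hc => h3.1 (Or.inl hc), u, hu.1, he⟩, ⟨fun hc => h3.1 (Or.inr hc), u, hu.2, he⟩⟩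
  calc (bd E (A ∪ B)).ncard + (bd E (A ∩ B)).ncard
      = (bd E (A ∪ B) ∪ bd E (A ∩ B)).ncard + (bd E (A ∪ B) ∩ bd E (A ∩ B)).ncard := by
        rw [Set.ncard_union_add_ncard_inter _ _ (Set.toFinite _) (Set.toFinite _)]
    _ ≤ (bd E A ∪ bd E B).ncard + (bd E A ∩ bd E B).ncard :=
        Nat.add_le_add (Set.ncard_le_ncard h1 (Set.toFinite _))
          (Set.ncard_le_ncard h2 (Set.toFinite _))
    _ = (bd E A).ncard + (bd E B).ncard :=
        Set.ncard_union_add_ncard_inter _ _ (Set.toFinite _) (Set.toFinite _)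

end Aux2
section Aux3a
variable {E : V → V → Prop} {X T C : Set V}

lemma sep_of_bd (hX : X ⊆ C) (hTb : ∀ t ∈ T, t ∉ bd E C) (hTC : ∀ t ∈ T, t ∉ C) :
    IsSep E X T (bd E C) := by
  rw [isSep_iff]
  refine ⟨?_, fun x hx y hy hr => hTC y hy (reach_stay (hX hx) hr)⟩
  rintro a (ha | ha) haS
  · exact haS.1 (hX ha)
  · exact hTb a ha haS

end Aux3a

/-- A "wall": the reachable-set side of a minimum `X`–`T` cut. -/
def Wall (E : V → V → Prop) (X T : Set V) (lam : ℕ) (A : Set V) : Prop :=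
  X ⊆ A ∧ IsSep E X T (bd E A) ∧ (bd E A).ncard = lam ∧ RSet E (bd E A) X = A

section Aux3
variable [Fintype V] {E : V → V → Prop} {S Su X Y T A B C : Set V} {lam : ℕ} {a b x v w z : V}

lemma Wall.T_disjoint (h : Wall E X T lam A) (ht : v ∈ T) : v ∉ A := by
  intro hc
  rw [← h.2.2.2] at hc
  exact h.2.1.rset_target ht hc

lemma wall_of_small_sep (hmin : ∀ S₀, IsSep E X T S₀ → lam ≤ S₀.ncard)
    (h : IsSep E X T Su) (hc : Su.ncard ≤ lam) :
    Wall E X T lam (RSet E Su X) ∧ bd E (RSet E Su X) = Su := by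
  have hb : bd E (RSet E Su X) ⊆ Su := bd_rset_subset (fun x hx => h.notmem_source hx)
  have hsep : IsSep E X T (bd E (RSet E Su X)) := sep_bd h
  have h1 : lam ≤ (bd E (RSet E Su X)).ncard := hmin _ hsep
  have heq : bd E (RSet E Su X) = Su :=
    Set.eq_of_subset_of_ncard_le hb (le_trans hc h1) (Set.toFinite _)
  refine ⟨⟨subset_rset, ?_, ?_, ?_⟩, heq⟩
  · rw [heq]; exact h
  · rw [heq]; exact le_antisymm hc (heq ▸ h1)
  · rw [heq]

lemma wall_inter_sep (hA : Wall E X T lam A) (hB : Wall E X T lam B) :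
    IsSep E X T (bd E (A ∩ B)) := by
  refine sep_of_bd (Set.subset_inter hA.1 hB.1) (fun t ht hc => ?_)
    (fun t ht hc => hA.T_disjoint ht hc.1)
  rcases bd_inter_subset hc with h | h
  exacts [hA.2.1.notmem_target ht h, hB.2.1.notmem_target ht h]

lemma wall_union_sep (hA : Wall E X T lam A) (hB : Wall E X T lam B) :
    IsSep E X T (bd E (A ∪ B)) := by
  refine sep_of_bd (hA.1.trans Set.subset_union_left) (fun t ht hc => ?_) (fun t ht hc => ?_)
  · rcases bd_union_subset hc with h | h
    exacts [hA.2.1.notmem_target ht h, hB.2.1.notmem_target ht h]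
  · rcases hc with h | h
    exacts [hA.T_disjoint ht h, hB.T_disjoint ht h]

lemma wall_sub_rset (hA : Wall E X T lam A) (hd : ∀ w ∈ A, w ∉ Su) : A ⊆ RSet E Su X := by
  conv_lhs => rw [← hA.2.2.2]
  exact rset_transfer (by rw [hA.2.2.2]; exact hd)

lemma wall_union (hmin : ∀ S₀, IsSep E X T S₀ → lam ≤ S₀.ncard)
    (hA : Wall E X T lam A) (hB : Wall E X T lam B) :
    ∃ C, Wall E X T lam C ∧ A ∪ B ⊆ C := by
  have hsepu : IsSep E X T (bd E (A ∪ B)) := wall_union_sep hA hB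
  have hsepi : IsSep E X T (bd E (A ∩ B)) := wall_inter_sep hA hB
  have hcard : (bd E (A ∪ B)).ncard ≤ lam := by
    have := bd_submod (E := E) (A := A) (B := B)
    rw [hA.2.2.1, hB.2.2.1] at this
    have h2 := hmin _ hsepi
    omega
  obtain ⟨hw, -⟩ := wall_of_small_sep hmin hsepu hcard
  refine ⟨_, hw, Set.union_subset ?_ ?_⟩
  · exact wall_sub_rset hA (fun w hw' hc => hc.1 (Or.inl hw'))
  · exact wall_sub_rset hB (fun w hw' hc => hc.1 (Or.inr hw'))

lemma exists_max_wall (hw : ∃ S, IsSep E X T S ∧ S.ncard = lam)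
    (hmin : ∀ S₀, IsSep E X T S₀ → lam ≤ S₀.ncard) :
    ∃ Astar, Wall E X T lam Astar ∧ ∀ A, Wall E X T lam A → A ⊆ Astar := by
  obtain ⟨S, hS, hScard⟩ := hw
  have hne : {A | Wall E X T lam A}.Nonempty :=
    ⟨_, (wall_of_small_sep hmin hS hScard.le).1⟩
  obtain ⟨Astar, hAstar, hmax'⟩ := Set.Finite.exists_maximalFor Set.ncard
    {A | Wall E X T lam A} (Set.toFinite _) hne
  have hmax : ∀ A' ∈ {A | Wall E X T lam A}, Astar.ncard ≤ A'.ncard → Astar.ncard = A'.ncard :=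
    fun A' hA' hle => le_antisymm hle (hmax' hA' hle)
  refine ⟨Astar, hAstar, fun A hA => ?_⟩
  obtain ⟨C, hC, hsub⟩ := wall_union hmin hAstar hA
  have h1 : Astar ⊆ C := (Set.subset_union_left).trans hsub
  have h2 : Astar.ncard = C.ncard :=
    hmax C hC (Set.ncard_le_ncard h1 (Set.toFinite _))
  have : Astar = C := Set.eq_of_subset_of_ncard_le h1 h2.ge (Set.toFinite _)
  rw [this]
  exact (Set.subset_union_right).trans hsub

end Aux3
section Aux4
variable [Fintype V] {E : V → V → Prop} {S S₀ Su X X0 Y T A B C Astar : Set V} {lam : ℕ}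
  {a b x v w z : V}

lemma dominance (himp : IsImpSep E X0 T S) (hXR : X ⊆ RSet E S X0)
    (hmin : ∀ S₀, IsSep E X T S₀ → lam ≤ S₀.ncard)
    (hA : Wall E X T lam Astar) : Astar ⊆ RSet E S X0 := by
  by_contra hc
  obtain ⟨w, hwB, hwA⟩ := Set.not_subset.1 hc
  set A := RSet E S X0 with hAdef
  set B := Astar with hBdef
  have hsepS : IsSep E X0 T S := himp.1.1
  have hX0S : ∀ x ∈ X0, x ∉ S := fun x hx => hsepS.notmem_source hx
  have hAS : ∀ u ∈ A, u ∉ S := fun u hu => rset_not_mem hX0S hu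
  have hbdA : bd E A = S := minsep_bd_eq himp.1
  have hTA : ∀ t ∈ T, t ∉ A := fun t ht => hsepS.rset_target ht
  have hX0A : X0 ⊆ A := subset_rset
  have hXA : X ⊆ A := hXR
  have hXB : X ⊆ B := hA.1
  set Su := bd E (A ∪ B) with hSudef
  have hbdsub : bd E (A ∪ B) ⊆ S ∪ bd E B := by
    intro u hu
    rcases bd_union_subset hu with h | h
    · exact Or.inl (hbdA ▸ h)
    · exact Or.inr h
  have hsepu : IsSep E X0 T Su := by
    refine sep_of_bd (hX0A.trans Set.subset_union_left) (fun t ht hc' => ?_) (fun t ht hc' => ?_)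
    · rcases hbdsub hc' with h | h
      exacts [hsepS.notmem_target ht h, hA.2.1.notmem_target ht h]
    · rcases hc' with h | h
      exacts [hTA t ht h, hA.T_disjoint ht h]
  have hsepi : IsSep E X T (bd E (A ∩ B)) := by
    refine sep_of_bd (Set.subset_inter hXA hXB) (fun t ht hc' => ?_)
      (fun t ht hc' => hTA t ht hc'.1)
    rcases bd_inter_subset hc' with h | h
    exacts [hsepS.notmem_target ht (hbdA ▸ h), hA.2.1.notmem_target ht h]
  have hcard : Su.ncard ≤ S.ncard := by
    have hsub := bd_submod (E := E) (A := A) (B := B)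
    rw [hbdA, hA.2.2.1, ← hSudef] at hsub
    have h2 := hmin _ hsepi
    omega
  -- reachability grows
  have hAC : A ⊆ RSet E Su X0 := rset_transfer (fun u hu hc' => hc'.1 (Or.inl hu))
  have hBC : B ⊆ RSet E Su X0 := by
    intro u hu
    rw [← hA.2.2.2] at hu
    obtain ⟨x, hx, hr⟩ := hu
    have hx0 : x ∈ RSet E Su X0 := hAC (hXR hx)
    obtain ⟨x0, hx0X, hr0⟩ := hx0
    refine ⟨x0, hx0X, hr0.trans (reach_transfer hr (fun u' hu' hc' => ?_))⟩
    have : u' ∈ B := by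
      rw [← hA.2.2.2]; exact ⟨x, hx, hu'⟩
    exact hc'.1 (Or.inr this)
  exact himp.2 ⟨Su, hsepu, hcard, ⟨hAC, fun hc' => hwA (hc' (hBC hwB))⟩⟩

lemma lam_increase (hmin : ∀ S₀, IsSep E X T S₀ → lam ≤ S₀.ncard)
    (hA : Wall E X T lam Astar) (hmax : ∀ A, Wall E X T lam A → A ⊆ Astar)
    (hv : v ∈ bd E Astar) (hS0 : IsSep E (X ∪ {v}) T S₀) : lam + 1 ≤ S₀.ncard := by
  by_contra hc
  have hlt : S₀.ncard ≤ lam := by omega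
  have hsepX : IsSep E X T S₀ := sep_mono_source Set.subset_union_left hS0
  set A := RSet E S₀ (X ∪ {v}) with hAdef
  set B := Astar with hBdef
  have hvA : v ∈ A := subset_rset (Or.inr rfl)
  have hbA : bd E A ⊆ S₀ := bd_rset_subset (fun x hx => hS0.notmem_source hx)
  have hsepbA : IsSep E (X ∪ {v}) T (bd E A) := sep_bd hS0
  have hTA : ∀ t ∈ T, t ∉ A := fun t ht => hS0.rset_target ht
  have hXA : X ⊆ A := (Set.subset_union_left).trans subset_rset
  have hsepi : IsSep E X T (bd E (A ∩ B)) := by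
    refine sep_of_bd (Set.subset_inter hXA hA.1) (fun t ht hc' => ?_)
      (fun t ht hc' => hTA t ht hc'.1)
    rcases bd_inter_subset hc' with h | h
    exacts [hS0.notmem_target ht (hbA h), hA.2.1.notmem_target ht h]
  have hsepu : IsSep E X T (bd E (A ∪ B)) := by
    refine sep_of_bd (hXA.trans Set.subset_union_left) (fun t ht hc' => ?_) (fun t ht hc' => ?_)
    · rcases bd_union_subset hc' with h | h
      exacts [hS0.notmem_target ht (hbA h), hA.2.1.notmem_target ht h]
    · rcases hc' with h | h
      exacts [hTA t ht h, hA.T_disjoint ht h]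
  have hcard : (bd E (A ∪ B)).ncard ≤ lam := by
    have hsub := bd_submod (E := E) (A := A) (B := B)
    have h1 : (bd E A).ncard ≤ lam :=
      le_trans (Set.ncard_le_ncard hbA (Set.toFinite _)) hlt
    have h2 := hmin _ hsepi
    rw [hA.2.2.1] at hsub
    omega
  obtain ⟨hwC, hbC⟩ := wall_of_small_sep hmin hsepu hcard
  have hCmax := hmax _ hwC
  have hBC : B ⊆ RSet E (bd E (A ∪ B)) X :=
    wall_sub_rset hA (fun u hu hc' => hc'.1 (Or.inr hu))
  obtain ⟨hvB, u, huB, he⟩ := hv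
  have hvC : v ∈ RSet E (bd E (A ∪ B)) X :=
    rset_trans (hBC huB) (Relation.ReflTransGen.single
      ⟨he, fun hc' => hc'.1 (Or.inr huB), fun hc' => hc'.1 (Or.inl hvA)⟩)
  exact hvB (hCmax hvC)

end Aux4
/-- delete a vertex from the graph -/
def dele (E : V → V → Prop) (v : V) : V → V → Prop :=
  fun a b => E a b ∧ a ≠ v ∧ b ≠ v

section Aux5
variable [Fintype V] {E : V → V → Prop} {S S' S₀ X X0 Y T : Set V} {a b x v w z : V}

lemma dstep_dele_iff (hv : v ∈ S) :
    DStep (dele E v) (S \ {v}) a b ↔ DStep E S a b := by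
  constructor
  · rintro ⟨⟨he, hav, hbv⟩, ha, hb⟩
    exact ⟨he, fun hc => ha ⟨hc, hav⟩, fun hc => hb ⟨hc, hbv⟩⟩
  · rintro ⟨he, ha, hb⟩
    exact ⟨⟨he, fun hc => ha (hc ▸ hv), fun hc => hb (hc ▸ hv)⟩,
      fun hc => ha hc.1, fun hc => hb hc.1⟩

lemma dreach_dele_iff (hv : v ∈ S) :
    DReach (dele E v) (S \ {v}) a b ↔ DReach E S a b :=
  ⟨Relation.ReflTransGen.mono (fun _ _ h => (dstep_dele_iff hv).1 h) _ _,
   Relation.ReflTransGen.mono (fun _ _ h => (dstep_dele_iff hv).2 h) _ _⟩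

lemma rset_dele (hv : v ∈ S) : RSet (dele E v) (S \ {v}) X = RSet E S X := by
  ext u
  exact ⟨fun ⟨x, hx, hr⟩ => ⟨x, hx, (dreach_dele_iff hv).1 hr⟩,
    fun ⟨x, hx, hr⟩ => ⟨x, hx, (dreach_dele_iff hv).2 hr⟩⟩

lemma dreach_dele_up (h : DReach E (S₀ ∪ {v}) a b) : DReach (dele E v) S₀ a b := by
  refine Relation.ReflTransGen.mono (fun x y hs => ?_) _ _ h
  exact ⟨⟨hs.1, fun hc => hs.2.1 (Or.inr hc), fun hc => hs.2.2 (Or.inr hc)⟩,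
    fun hc => hs.2.1 (Or.inl hc), fun hc => hs.2.2 (Or.inl hc)⟩

lemma sep_dele_up (h : IsSep (dele E v) X T S₀) (hvX : v ∉ X) (hvT : v ∉ T) :
    IsSep E X T (S₀ ∪ {v}) := by
  rw [isSep_iff] at h ⊢
  constructor
  · rintro a ha hc
    rcases hc with hc | hc
    · exact h.1 a ha hc
    · rcases ha with ha | ha
      · exact hvX (hc ▸ ha)
      · exact hvT (hc ▸ ha)
  · exact fun x hx y hy hr => h.2 x hx y hy (dreach_dele_up hr)

lemma dele_step_drop (hs : DStep (dele E v) (S₀ \ {v}) a b) : DStep (dele E v) S₀ a b :=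
  ⟨hs.1, fun hc => hs.2.1 ⟨hc, hs.1.2.1⟩, fun hc => hs.2.2 ⟨hc, hs.1.2.2⟩⟩

lemma sep_dele_drop (h : IsSep (dele E v) X T S₀) : IsSep (dele E v) X T (S₀ \ {v}) := by
  rw [isSep_iff] at h ⊢
  refine ⟨fun a ha hc => h.1 a ha hc.1, fun x hx y hy hr => h.2 x hx y hy ?_⟩
  exact Relation.ReflTransGen.mono (fun _ _ hs => dele_step_drop hs) _ _ hr

lemma imp_dele (himp : IsImpSep E X0 T S) (hv : v ∈ S) :
    IsImpSep (dele E v) X0 T (S \ {v}) := by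
  have hvX0 : v ∉ X0 := fun hc => (isSep_iff.1 himp.1.1).1 v (Or.inl hc) hv
  have hvT : v ∉ T := fun hc => (isSep_iff.1 himp.1.1).1 v (Or.inr hc) hv
  have hSd : (S \ {v}) ∪ {v} = S := by
    rw [Set.diff_union_self, Set.union_eq_self_of_subset_right (Set.singleton_subset_iff.2 hv)]
  have hcardS : (S \ {v}).ncard + 1 = S.ncard :=
    Set.ncard_diff_singleton_add_one hv (Set.toFinite _)
  refine ⟨⟨?_, ?_⟩, ?_⟩
  · rw [isSep_iff]
    refine ⟨fun a ha hc => (isSep_iff.1 himp.1.1).1 a ha hc.1, fun x hx y hy hr => ?_⟩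
    exact himp.1.1.2 x hx y hy ((dreach_dele_iff hv).1 hr)
  · rintro S' hss hsep
    have hsepE : IsSep E X0 T (S' ∪ {v}) := sep_dele_up hsep hvX0 hvT
    refine himp.1.2 (S' ∪ {v}) ?_ hsepE
    rw [Set.ssubset_def]
    obtain ⟨x, hxS, hxS'⟩ := Set.exists_of_ssubset hss
    constructor
    · rw [← hSd]
      exact Set.union_subset_union_left _ hss.subset
    · intro hc
      rcases hc hxS.1 with h | h
      · exact hxS' h
      · exact hxS.2 h
  · rintro ⟨S', hsep, hcard, hss⟩
    have hsep2 : IsSep (dele E v) X0 T (S' \ {v}) := sep_dele_drop hsep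
    have hvS' : v ∉ S' \ {v} := fun hc => hc.2 rfl
    have hcard2 : (S' \ {v}).ncard ≤ (S \ {v}).ncard :=
      le_trans (Set.ncard_le_ncard Set.diff_subset (Set.toFinite _)) hcard
    have hsepE : IsSep E X0 T ((S' \ {v}) ∪ {v}) := sep_dele_up hsep2 hvX0 hvT
    refine himp.2 ⟨(S' \ {v}) ∪ {v}, hsepE, ?_, ?_⟩
    · rw [Set.union_singleton, Set.ncard_insert_of_notMem hvS' (Set.toFinite _), ← hcardS]
      omega
    · have h1 : RSet E ((S' \ {v}) ∪ {v}) X0 = RSet (dele E v) (S' \ {v}) X0 := by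
        rw [← rset_dele (v := v) (Or.inr rfl : v ∈ (S' \ {v}) ∪ {v})]
        rw [Set.union_singleton, Set.insert_diff_self_of_notMem hvS']
      have h2 : RSet E S X0 = RSet (dele E v) (S \ {v}) X0 := (rset_dele hv).symm
      rw [h1, h2]
      exact hss.trans_le (rset_anti Set.diff_subset)

end Aux5
section Aux6
variable [Fintype V] {E : V → V → Prop} {S S' S₀ X X0 Y T : Set V} {a b x v w z : V}

lemma sep_extend (hs : IsSep E X0 T S) (hXR : X ⊆ RSet E S X0) : IsSep E X T S := by
  rw [isSep_iff]
  constructor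
  · rintro a (ha | ha) hc
    · exact rset_not_mem (fun x hx => hs.notmem_source hx) (hXR ha) hc
    · exact hs.notmem_target ha hc
  · intro x hx y hy hr
    exact hs.rset_target hy (rset_trans (hXR hx) hr)

lemma main_count (T : Set V) : ∀ (n : ℕ) (E : V → V → Prop) (X X0 : Set V) (p : ℕ),
    X0 ⊆ X → (∀ S₀ : Set V, IsSep E X T S₀ → 2 * p ≤ n + S₀.ncard) →
    {S : Set V | IsImpSep E X0 T S ∧ S.ncard ≤ p ∧ X ⊆ RSet E S X0}.ncard ≤ 2 ^ n := by
  intro n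
  induction n with
  | zero =>
    intro E X X0 p hX0X hH
    set Den := {S : Set V | IsImpSep E X0 T S ∧ S.ncard ≤ p ∧ X ⊆ RSet E S X0} with hDen
    rcases Set.eq_empty_or_nonempty Den with hD | ⟨S, hS⟩
    · rw [hD]; simp
    have hSsep : IsSep E X T S := sep_extend hS.1.1.1 hS.2.2
    have h2p : 2 * p ≤ 0 + S.ncard := hH S hSsep
    have hp0 : p = 0 := by have := hS.2.1; omega
    have hS0 : S = ∅ := by
      have : S.ncard = 0 := by have := hS.2.1; omega
      exact (Set.ncard_eq_zero (Set.toFinite S)).1 this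
    have hsep0 : IsSep E X0 T ∅ := sep_mono_source hX0X (hS0 ▸ hSsep)
    have hsub : Den ⊆ {∅} := by
      intro S' hS'
      by_contra hne
      have hne' : S' ≠ ∅ := fun hc => hne (by simp [hc])
      refine hS'.1.1.2 ∅ ?_ hsep0
      exact ⟨Set.empty_subset _, fun hc => hne' (Set.subset_empty_iff.1 hc)⟩
    calc Den.ncard ≤ ({∅} : Set (Set V)).ncard := Set.ncard_le_ncard hsub (Set.toFinite _)
      _ ≤ 2 ^ 0 := by simp
  | succ n ih =>
    intro E X X0 p hX0X hH
    set Den := {S : Set V | IsImpSep E X0 T S ∧ S.ncard ≤ p ∧ X ⊆ RSet E S X0} with hDen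
    rcases Set.eq_empty_or_nonempty Den with hD | ⟨S1, hS1⟩
    · rw [hD]; simp
    have hS1sep : IsSep E X T S1 := sep_extend hS1.1.1.1 hS1.2.2
    -- minimum cut size
    set K := {k : ℕ | ∃ S₀ : Set V, IsSep E X T S₀ ∧ S₀.ncard = k} with hK
    have hKne : K.Nonempty := ⟨S1.ncard, S1, hS1sep, rfl⟩
    set lam := sInf K with hlam
    obtain ⟨W, hWsep, hWcard⟩ : lam ∈ K := Nat.sInf_mem hKne
    have hmin : ∀ S₀ : Set V, IsSep E X T S₀ → lam ≤ S₀.ncard :=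
      fun S₀ h => Nat.sInf_le ⟨S₀, h, rfl⟩
    by_cases hlam0 : lam = 0
    · -- empty separator: only the empty important separator
      have hW0 : W = ∅ := (Set.ncard_eq_zero (Set.toFinite W)).1 (by omega)
      have hsep0 : IsSep E X0 T ∅ := sep_mono_source hX0X (hW0 ▸ hWsep)
      have hsub : Den ⊆ {∅} := by
        intro S' hS'
        by_contra hne
        have hne' : S' ≠ ∅ := fun hc => hne (by simp [hc])
        refine hS'.1.1.2 ∅ ?_ hsep0
        exact ⟨Set.empty_subset _, fun hc => hne' (Set.subset_empty_iff.1 hc)⟩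
      calc Den.ncard ≤ ({∅} : Set (Set V)).ncard := Set.ncard_le_ncard hsub (Set.toFinite _)
        _ ≤ 2 ^ (n + 1) := by simp; exact Nat.one_le_two_pow
    -- now 1 ≤ lam ≤ p
    have hlam1 : 1 ≤ lam := by omega
    have hlamp : lam ≤ p := le_trans (hmin S1 hS1sep) hS1.2.1
    have h2plam : 2 * p ≤ (n + 1) + lam := by
      have := hH W hWsep; omega
    obtain ⟨Astar, hAw, hAmax⟩ := exists_max_wall ⟨W, hWsep, hWcard⟩ hmin
    have hbdne : (bd E Astar).Nonempty := by
      apply Set.nonempty_of_ncard_ne_zero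
      rw [hAw.2.2.1]; omega
    obtain ⟨v, hv⟩ := hbdne
    have hvA : v ∉ Astar := hv.1
    have hvX : v ∉ X := fun hc => hvA (hAw.1 hc)
    have hvT : v ∉ T := fun hc => hAw.2.1.notmem_target hc hv
    set D1 := {S | S ∈ Den ∧ v ∈ S} with hD1
    set D2 := {S | S ∈ Den ∧ v ∉ S} with hD2
    have hsplit : Den ⊆ D1 ∪ D2 := by
      intro S hS
      by_cases hvS : v ∈ S
      · exact Or.inl ⟨hS, hvS⟩
      · exact Or.inr ⟨hS, hvS⟩
    -- Case 1 : v ∈ S, recurse on G - v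
    have hp1 : 1 ≤ p := le_trans hlam1 hlamp
    have hH1 : ∀ S₀ : Set V, IsSep (dele E v) X T S₀ → 2 * (p - 1) ≤ n + S₀.ncard := by
      intro S₀ h
      have h1 := hH (S₀ ∪ {v}) (sep_dele_up h hvX hvT)
      have h2 : (S₀ ∪ {v}).ncard ≤ S₀.ncard + 1 := by
        refine le_trans (Set.ncard_union_le _ _) ?_
        simp
      omega
    have hbound1 : D1.ncard ≤ 2 ^ n := by
      have hinj : Set.InjOn (fun S => S \ {v}) D1 := by
        intro S₁ h₁ S₂ h₂ heq
        have heq' : S₁ \ {v} = S₂ \ {v} := heq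
        ext u
        by_cases hu : u = v
        · subst hu; simp [h₁.2, h₂.2]
        · constructor
          · intro h
            have : u ∈ S₁ \ {v} := ⟨h, hu⟩
            rw [heq'] at this; exact this.1
          · intro h
            have : u ∈ S₂ \ {v} := ⟨h, hu⟩
            rw [← heq'] at this; exact this.1
      have himg : (fun S => S \ {v}) '' D1 ⊆
          {S : Set V | IsImpSep (dele E v) X0 T S ∧ S.ncard ≤ p - 1 ∧
            X ⊆ RSet (dele E v) S X0} := by
        rintro S' ⟨S, hS, rfl⟩
        dsimp only
        refine ⟨imp_dele hS.1.1 hS.2, ?_, ?_⟩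
        · have := Set.ncard_diff_singleton_add_one hS.2 (Set.toFinite S)
          have := hS.1.2.1
          omega
        · rw [rset_dele hS.2]
          exact hS.1.2.2
      calc D1.ncard = ((fun S => S \ {v}) '' D1).ncard :=
            (Set.ncard_image_of_injOn hinj).symm
        _ ≤ _ := Set.ncard_le_ncard himg (Set.toFinite _)
        _ ≤ 2 ^ n := ih (dele E v) X X0 (p - 1) hX0X hH1
    -- Case 2 : v ∉ S, recurse with v added to X
    have hH2 : ∀ S₀ : Set V, IsSep E (X ∪ {v}) T S₀ → 2 * p ≤ n + S₀.ncard := by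
      intro S₀ h
      have := lam_increase hmin hAw hAmax hv h
      omega
    have hbound2 : D2.ncard ≤ 2 ^ n := by
      have hsub2 : D2 ⊆ {S : Set V | IsImpSep E X0 T S ∧ S.ncard ≤ p ∧
          X ∪ {v} ⊆ RSet E S X0} := by
        rintro S ⟨hS, hvS⟩
        have hdom : Astar ⊆ RSet E S X0 := dominance hS.1 hS.2.2 hmin hAw
        obtain ⟨-, u, huB, he⟩ := hv
        have hX0S : ∀ x ∈ X0, x ∉ S := fun x hx => hS.1.1.1.notmem_source hx
        have hvR : v ∈ RSet E S X0 :=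
          rset_trans (hdom huB) (Relation.ReflTransGen.single
            ⟨he, rset_not_mem hX0S (hdom huB), hvS⟩)
        exact ⟨hS.1, hS.2.1, Set.union_subset hS.2.2 (Set.singleton_subset_iff.2 hvR)⟩
      calc D2.ncard ≤ _ := Set.ncard_le_ncard hsub2 (Set.toFinite _)
        _ ≤ 2 ^ n := ih E (X ∪ {v}) X0 p (hX0X.trans Set.subset_union_left) hH2
    calc Den.ncard ≤ (D1 ∪ D2).ncard := Set.ncard_le_ncard hsplit (Set.toFinite _)
      _ ≤ D1.ncard + D2.ncard := Set.ncard_union_le _ _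
      _ ≤ 2 ^ n + 2 ^ n := Nat.add_le_add hbound1 hbound2
      _ = 2 ^ (n + 1) := by rw [pow_succ]; omega

end Aux6
section Aux7
variable [Fintype V] {E : V → V → Prop} {S T : Set V} {v z : V}

lemma exact_shadow_imp (hminz : IsMinSep E {z} T S) (himp : IsImpSep E {v} T S) :
    IsImpSep E {z} T S := by
  refine ⟨hminz, ?_⟩
  rintro ⟨S'0, hsep0, hcard0, hss0⟩
  -- pick a minimum-cardinality witness
  obtain ⟨S', hS'F, hS'min⟩ := Set.exists_min_image
    {S' : Set V | IsSep E {z} T S' ∧ S'.ncard ≤ S.ncard ∧ RSet E S {z} ⊂ RSet E S' {z}}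
    Set.ncard (Set.toFinite _) ⟨S'0, hsep0, hcard0, hss0⟩
  obtain ⟨hS'sep, hS'card, hS'ss⟩ := hS'F
  have hminv : IsMinSep E {v} T S := himp.1
  set Rv := RSet E S {v} with hRv
  set Rz := RSet E S {z} with hRzdef
  set B := RSet E S' {z} with hBdef
  set A := Rv ∪ Rz with hAdef
  have hbRv : bd E Rv = S := minsep_bd_eq hminv
  have hbRz : bd E Rz = S := minsep_bd_eq hminz
  have hzS' : z ∉ S' := hS'sep.notmem_source rfl
  have hzS : z ∉ S := hminz.1.notmem_source rfl
  have hvS : v ∉ S := hminv.1.notmem_source rfl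
  have hRzB : Rz ⊆ B := hS'ss.subset
  have hRvS : ∀ u ∈ Rv, u ∉ S := fun u hu =>
    rset_not_mem (fun x hx => (Set.mem_singleton_iff.1 hx) ▸ hvS) hu
  have hRzS : ∀ u ∈ Rz, u ∉ S := fun u hu =>
    rset_not_mem (fun x hx => (Set.mem_singleton_iff.1 hx) ▸ hzS) hu
  have hBS' : ∀ u ∈ B, u ∉ S' := fun u hu =>
    rset_not_mem (fun x hx => (Set.mem_singleton_iff.1 hx) ▸ hzS') hu
  have hAS : ∀ u ∈ A, u ∉ S := by
    rintro u (hu | hu)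
    exacts [hRvS u hu, hRzS u hu]
  have hbB : bd E B ⊆ S' := bd_rset_subset (fun x hx => (Set.mem_singleton_iff.1 hx) ▸ hzS')
  have hTA : ∀ t ∈ T, t ∉ A := by
    rintro t ht (hc | hc)
    exacts [hminv.1.rset_target ht hc, hminz.1.rset_target ht hc]
  have hTB : ∀ t ∈ T, t ∉ B := fun t ht => hS'sep.rset_target ht
  have hbdA : bd E A = S := by
    apply Set.Subset.antisymm
    · intro u hu
      rcases bd_union_subset hu with h | h
      · exact hbRv ▸ h
      · exact hbRz ▸ h
    · intro s hs
      have hsbz : s ∈ bd E Rz := hbRz.symm ▸ hs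
      obtain ⟨hsRz, u, huRz, he⟩ := hsbz
      exact ⟨fun hc => hAS s hc hs, u, Or.inr huRz, he⟩
  by_cases hSB : ∃ s ∈ S, s ∈ B
  · -- main case : build a better v–T separator
    obtain ⟨s, hsS, hsB⟩ := hSB
    set Su := bd E (A ∪ B) with hSudef
    have hSuT : ∀ t ∈ T, t ∉ Su := by
      intro t ht hc
      rcases bd_union_subset hc with h | h
      · exact hminv.1.notmem_target ht (hbdA ▸ h)
      · exact hS'sep.notmem_target ht (hbB h)
    have hzA : z ∈ Rz := subset_rset rfl
    have hzAB : z ∈ A ∩ B := ⟨Or.inr hzA, subset_rset rfl⟩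
    have hRzAB : Rz ⊆ A ∩ B := Set.subset_inter Set.subset_union_right hRzB
    -- the crossing cut is large
    have hcross : S'.ncard ≤ (bd E (A ∩ B)).ncard := by
      by_cases hSsub : S ⊆ bd E (A ∩ B)
      · exact le_trans hS'card (Set.ncard_le_ncard hSsub (Set.toFinite _))
      obtain ⟨s₀, hs₀S, hs₀nb⟩ := Set.not_subset.1 hSsub
      by_cases hbig : S.ncard < (bd E (A ∩ B)).ncard
      · omega
      -- bd (A ∩ B) is itself a candidate in the family
      have hsepi : IsSep E {z} T (bd E (A ∩ B)) := by
        refine sep_of_bd (Set.singleton_subset_iff.2 hzAB) (fun t ht hc => ?_)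
          (fun t ht hc => hTB t ht hc.2)
        rcases bd_inter_subset hc with h | h
        · exact hminz.1.notmem_target ht (hbdA ▸ h)
        · exact hS'sep.notmem_target ht (hbB h)
      have hRzsub : Rz ⊆ RSet E (bd E (A ∩ B)) {z} :=
        rset_transfer (fun w hw hc => hc.1 (hRzAB hw))
      -- s₀ is newly reachable
      have hs₀bz : s₀ ∈ bd E Rz := hbRz.symm ▸ hs₀S
      obtain ⟨hs₀Rz, u, huRz, he⟩ := hs₀bz
      have hs₀AB : s₀ ∈ A ∩ B := by
        by_contra hc
        exact hs₀nb ⟨hc, u, hRzAB huRz, he⟩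
      have hs₀new : s₀ ∈ RSet E (bd E (A ∩ B)) {z} :=
        rset_trans (hRzsub huRz) (Relation.ReflTransGen.single
          ⟨he, fun hc => hc.1 (hRzAB huRz), fun hc => hc.1 hs₀AB⟩)
      have hmem : bd E (A ∩ B) ∈
          {S' : Set V | IsSep E {z} T S' ∧ S'.ncard ≤ S.ncard ∧
            RSet E S {z} ⊂ RSet E S' {z}} :=
        ⟨hsepi, by omega, hRzsub, fun hc => hs₀Rz (hc hs₀new)⟩
      exact hS'min _ hmem
    have hSucard : Su.ncard ≤ S.ncard := by
      have hsub := bd_submod (E := E) (A := A) (B := B)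
      have hbBcard : (bd E B).ncard ≤ S'.ncard := Set.ncard_le_ncard hbB (Set.toFinite _)
      rw [hbdA, ← hSudef] at hsub
      omega
    have hsepu : IsSep E {v} T Su := by
      refine sep_of_bd (Set.singleton_subset_iff.2 (Or.inl (Or.inl (subset_rset rfl))))
        hSuT (fun t ht hc => ?_)
      rcases hc with h | h
      exacts [hTA t ht h, hTB t ht h]
    have hRvsub : Rv ⊆ RSet E Su {v} :=
      rset_transfer (fun w hw hc => hc.1 (Or.inl (Or.inl hw)))
    have hsbv : s ∈ bd E Rv := hbRv.symm ▸ hsS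
    obtain ⟨hsRv, u, huRv, he⟩ := hsbv
    have hsnew : s ∈ RSet E Su {v} :=
      rset_trans (hRvsub huRv) (Relation.ReflTransGen.single
        ⟨he, fun hc => hc.1 (Or.inl (Or.inl huRv)), fun hc => hc.1 (Or.inr hsB)⟩)
    exact himp.2 ⟨Su, hsepu, hSucard, hRvsub, fun hc => hsRv (hc hsnew)⟩
  · -- otherwise B avoids S entirely, contradicting strictness
    push_neg at hSB
    obtain ⟨w, hwB, hwRz⟩ := Set.exists_of_ssubset hS'ss
    obtain ⟨x, hx, hr⟩ := hwB
    have hx' : x = z := Set.mem_singleton_iff.1 hx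
    subst hx'
    have : DReach E S x w := by
      refine reach_transfer hr (fun u hu hc => ?_)
      exact hSB u hc ⟨x, rfl, hu⟩
    exact hwRz ⟨x, rfl, this⟩

end Aux7

/-- For a fixed vertex `z`, the number of sets `S` that are important
`v`–`T` separators of size at most `p` for some vertex `v` and that contain `z` in their
exact reverse shadow (i.e. `S` is a minimal `z`–`T` separator) is at most `4^p`. -/
theorem count_exact_shadows_containing_vertex [Fintype V]
    (E : V → V → Prop) (T : Set V) (z : V) (p : ℕ) :
    {S : Set V | (∃ v, IsImpSep E {v} T S ∧ S.ncard ≤ p) ∧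
        IsMinSep E {z} T S}.ncard ≤ 4 ^ p := by
  have hsub : {S : Set V | (∃ v, IsImpSep E {v} T S ∧ S.ncard ≤ p) ∧ IsMinSep E {z} T S} ⊆
      {S : Set V | IsImpSep E {z} T S ∧ S.ncard ≤ p ∧ ({z} : Set V) ⊆ RSet E S {z}} := by
    rintro S ⟨⟨v, himp, hcard⟩, hminz⟩
    exact ⟨exact_shadow_imp hminz himp, hcard, subset_rset⟩
  have h := main_count T (2 * p) E {z} {z} p subset_rfl (fun S₀ _ => by omega)
  calc {S : Set V | (∃ v, IsImpSep E {v} T S ∧ S.ncard ≤ p) ∧ IsMinSep E {z} T S}.ncard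
      ≤ _ := Set.ncard_le_ncard hsub (Set.toFinite _)
    _ ≤ 2 ^ (2 * p) := h
    _ = 4 ^ p := by rw [pow_mul]; norm_num
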